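/- Let M be a positive integer and let τ, p_t, q_t, p_d, q_d, β_u, β_j > 0 be real numbers. For a ≥ 0 define γ(a) = τ p_t β_u² / (τ p_t β_u + τ q_t β_j a + 1) and ρ(a) = M p_d γ(a) / (p_d β_u + q_d β_j + M (q_d q_t / p_t)(β_j/β_u)² a γ(a) + 1). Then ρ is strictly decreasing on [0, ∞): for all 0 ≤ a₁ < a₂, ρ(a₂) < ρ(a₁). -/
import Mathlib


/-- **Monotonicity of the effective SINR in the pilot/jamming correlation**: the SINR
`ρ(a)` of Proposition 1 is strictly decreasing in `a = |s_jᵀ s_u^*|²` on `[0, ∞)`. -/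
theorem sinr_strictAnti_in_correlation
    (M : ℕ) (hM : 0 < M)
    (τ p_t q_t p_d q_d β_u β_j : ℝ)
    (hτ : 0 < τ) (hpt : 0 < p_t) (hqt : 0 < q_t) (hpd : 0 < p_d) (hqd : 0 < q_d)
    (hβu : 0 < β_u) (hβj : 0 < β_j)
    (γ ρ : ℝ → ℝ)
    (hγ : ∀ a : ℝ, γ a = τ * p_t * β_u ^ 2 / (τ * p_t * β_u + τ * q_t * β_j * a + 1))
    (hρ : ∀ a : ℝ, ρ a = (M : ℝ) * p_d * γ a /
        (p_d * β_u + q_d * β_j + (M : ℝ) * (q_d * q_t / p_t) * (β_j / β_u) ^ 2 * a * γ a + 1)) :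
    ∀ a₁ a₂ : ℝ, 0 ≤ a₁ → a₁ < a₂ → ρ a₂ < ρ a₁ := by
  intro a₁ a₂ ha₁ h12
  have hM' : (0:ℝ) < (M:ℝ) := by exact_mod_cast hM
  set N : ℝ := (M:ℝ) * p_d * (τ * p_t * β_u ^ 2) with hN
  set E : ℝ := p_d * β_u + q_d * β_j + 1 with hE
  set G : ℝ := E * (τ * p_t * β_u + 1) with hG
  set S : ℝ := E * (τ * q_t * β_j) + (M:ℝ) * q_d * q_t * τ * β_j ^ 2 with hS
  have hNpos : 0 < N := by positivity
  have hEpos : 0 < E := by positivity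
  have hGpos : 0 < G := by positivity
  have hSpos : 0 < S := by positivity
  have hform : ∀ a : ℝ, 0 ≤ a → ρ a = N / (G + S * a) := by
    intro a ha
    have hD : (0:ℝ) < τ * p_t * β_u + τ * q_t * β_j * a + 1 := by positivity
    have hGS : (0:ℝ) < G + S * a := by positivity
    rw [hρ, hγ]
    rw [div_eq_div_iff]
    · field_simp
      ring
    · have hγpos : (0:ℝ) < τ * p_t * β_u ^ 2 / (τ * p_t * β_u + τ * q_t * β_j * a + 1) := by
        positivity
      positivity
    · exact hGS.ne'
  rw [hform a₁ ha₁, hform a₂ (ha₁.trans h12.le)]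
  apply div_lt_div_of_pos_left hNpos (by positivity)
  have : S * a₁ < S * a₂ := by exact (mul_lt_mul_iff_right₀ hSpos).mpr h12
  linarith
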